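/- arXiv:2504.21176 — 2 statements merged into one kernel-verified Lean document; each statement's English description precedes it below -/
import Mathlib

section
/- For every positive integer n, (n-1)! - a_n = ∑_{k=1}^{n-1} C(n-1, k-1) · (n-k-1)! · a_k, where a_n = ∑_{k=1}^{n} (-1)^(k-1) (k-1)! c(n,k). -/
/-- The number of cycles (orbits, including fixed points) of a permutation. -/
noncomputable def cycleCount {n : ℕ} (σ : Equiv.Perm (Fin n)) : ℕ :=
  Nat.card (Quotient (MulAction.orbitRel (Subgroup.zpowers σ) (Fin n)))

/-- The unsigned Stirling number of the first kind: the number of permutations of an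
`n`-element set with exactly `k` cycles. -/
noncomputable def stirling1 (n k : ℕ) : ℕ :=
  Nat.card {σ : Equiv.Perm (Fin n) // cycleCount σ = k}

/-- `a n = ∑_{k=1}^n (-1)^(k-1) (k-1)! c(n,k)`. -/
noncomputable def a (n : ℕ) : ℤ :=
  ∑ k ∈ Finset.Icc 1 n, (-1 : ℤ) ^ (k - 1) * (Nat.factorial (k - 1) : ℤ) * (stirling1 n k : ℤ)


open Finset

/-- Recursive unsigned Stirling numbers of the first kind. -/
def stirN : ℕ → ℕ → ℕ
  | 0, 0 => 1
  | 0, _+1 => 0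
  | _+1, 0 => 0
  | n+1, k+1 => n * stirN n (k+1) + stirN n k

lemma stirN_succ_succ (n k : ℕ) : stirN (n+1) (k+1) = n * stirN n (k+1) + stirN n k := rfl
lemma stirN_zero_succ (k : ℕ) : stirN 0 (k+1) = 0 := rfl
lemma stirN_succ_zero (n : ℕ) : stirN (n+1) 0 = 0 := rfl
lemma stirN_zero_zero : stirN 0 0 = 1 := rfl

lemma stirN_of_lt : ∀ n k : ℕ, n < k → stirN n k = 0 := by
  intro n
  induction n with
  | zero => intro k hk; match k, hk with | (k+1), _ => rfl
  | succ n ih =>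
    intro k hk
    match k, hk with
    | (k+1), hk =>
      rw [stirN_succ_succ, ih (k+1) (by omega), ih k (by omega)]; ring

lemma stirN_one (n : ℕ) : stirN (n+1) 1 = n.factorial := by
  induction n with
  | zero => rfl
  | succ n ih =>
    rw [stirN_succ_succ, ih, stirN_succ_zero, Nat.factorial_succ]
    ring

/-- The "cycle of the last element" identity. -/
lemma stirN_V (m j : ℕ) :
    m.factorial * stirN 0 j
      + ∑ i ∈ range m, m.choose (i+1) * (m-1-i).factorial * stirN (i+1) j
      = stirN (m+1) (j+1) := by
  induction m with
  | zero => simp [stirN_succ_succ]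
  | succ m ih =>
    rw [Finset.sum_range_succ]
    have hlast : (m+1).choose (m+1) * (m+1-1-m).factorial * stirN (m+1) j
        = stirN (m+1) j := by simp
    have hcoef : ∀ i ∈ range m, (m+1).choose (i+1) * (m+1-1-i).factorial * stirN (i+1) j
        = (m+1) * (m.choose (i+1) * (m-1-i).factorial * stirN (i+1) j) := by
      intro i hi
      rw [mem_range] at hi
      have h1 : m + 1 - 1 - i = (m - 1 - i) + 1 := by omega
      have h2 : m.choose (i+1) * (m + 1) = (m+1).choose (i+1) * (m + 1 - (i+1)) :=
        Nat.choose_mul_succ_eq m (i+1)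
      have h3 : m + 1 - (i + 1) = (m - 1 - i) + 1 := by omega
      rw [h1, Nat.factorial_succ]
      rw [h3] at h2
      calc (m+1).choose (i+1) * (((m-1-i) + 1) * (m-1-i).factorial) * stirN (i+1) j
          = ((m+1).choose (i+1) * ((m-1-i) + 1)) * ((m-1-i).factorial * stirN (i+1) j) := by ring
        _ = (m.choose (i+1) * (m+1)) * ((m-1-i).factorial * stirN (i+1) j) := by rw [← h2]
        _ = (m+1) * (m.choose (i+1) * (m-1-i).factorial * stirN (i+1) j) := by ring
    rw [Finset.sum_congr rfl hcoef, hlast, ← Finset.mul_sum]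
    have : (m+1).factorial * stirN 0 j = (m+1) * (m.factorial * stirN 0 j) := by
      rw [Nat.factorial_succ]; ring
    rw [this]
    rw [stirN_succ_succ (m+1) j]
    rw [← ih]
    ring

/-- The key identity `U m j = j * stirN (m+1) (j+1)`. -/
lemma stirN_U (m : ℕ) : ∀ j : ℕ,
    ∑ i ∈ range m, m.choose i * (m-1-i).factorial * stirN (i+1) j
      = j * stirN (m+1) (j+1) := by
  induction m with
  | zero =>
    intro j
    simp only [range_zero, sum_empty]
    match j with
    | 0 => simp
    | j+1 => rw [stirN_succ_succ, stirN_zero_succ, stirN_zero_succ]; ring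
  | succ m ih =>
    intro j
    match j with
    | 0 =>
      rw [Finset.sum_eq_zero, mul_comm, Nat.mul_zero]
      intro i _
      rw [stirN_succ_zero, Nat.mul_zero]
    | (jj+1) =>
      -- expand stirN (i+1) (jj+1) = i * stirN i (jj+1) + stirN i jj
      have expand : ∀ i ∈ range (m+1),
          (m+1).choose i * (m+1-1-i).factorial * stirN (i+1) (jj+1)
          = (m+1).choose i * (m-i).factorial * (i * stirN i (jj+1))
            + (m+1).choose i * (m-i).factorial * stirN i jj := by
        intro i _
        have h0 : m + 1 - 1 - i = m - i := by omega
        rw [h0, stirN_succ_succ]; ring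
      rw [Finset.sum_congr rfl expand, Finset.sum_add_distrib]
      -- A part
      have hA : ∑ i ∈ range (m+1), (m+1).choose i * (m-i).factorial * (i * stirN i (jj+1))
          = (m+1) * ((jj+1) * stirN (m+1) (jj+2)) := by
        rw [Finset.sum_range_succ']
        simp only [Nat.mul_zero, Nat.zero_mul, mul_zero, add_zero]
        have hterm : ∀ i ∈ range m,
            (m+1).choose (i+1) * (m-(i+1)).factorial * ((i+1) * stirN (i+1) (jj+1))
            = (m+1) * (m.choose i * (m-1-i).factorial * stirN (i+1) (jj+1)) := by
          intro i _
          have h1 : m - (i+1) = m - 1 - i := by omega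
          have h2 : (m+1) * m.choose i = (m+1).choose (i+1) * (i+1) :=
            Nat.add_one_mul_choose_eq m i
          rw [h1]
          calc (m+1).choose (i+1) * (m-1-i).factorial * ((i+1) * stirN (i+1) (jj+1))
              = ((m+1).choose (i+1) * (i+1)) * ((m-1-i).factorial * stirN (i+1) (jj+1)) := by
                ring
            _ = ((m+1) * m.choose i) * ((m-1-i).factorial * stirN (i+1) (jj+1)) := by rw [← h2]
            _ = (m+1) * (m.choose i * (m-1-i).factorial * stirN (i+1) (jj+1)) := by ring
        rw [Finset.sum_congr rfl hterm, ← Finset.mul_sum, ih (jj+1)]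
      -- B part
      have hB : ∑ i ∈ range (m+1), (m+1).choose i * (m-i).factorial * stirN i jj
          = jj * stirN (m+1) (jj+1) + stirN (m+1) (jj+1) := by
        rw [Finset.sum_range_succ']
        have hterm : ∀ i ∈ range m,
            (m+1).choose (i+1) * (m-(i+1)).factorial * stirN (i+1) jj
            = m.choose i * (m-1-i).factorial * stirN (i+1) jj
              + m.choose (i+1) * (m-1-i).factorial * stirN (i+1) jj := by
          intro i _
          have h1 : m - (i+1) = m - 1 - i := by omega
          rw [h1, Nat.choose_succ_succ]; ring
        rw [Finset.sum_congr rfl hterm, Finset.sum_add_distrib, ih jj]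
        have h0 : (m+1).choose 0 * (m-0).factorial * stirN 0 jj
            = m.factorial * stirN 0 jj := by simp
        rw [h0]
        have hV := stirN_V m jj
        omega
      rw [hA, hB, stirN_succ_succ (m+1) (jj+1)]
      ring
open Equiv Finset MulAction Subgroup



section helpers

variable {α β : Type*}

lemma invariant_zpow (σ : Equiv.Perm α) (F : α → β)
    (h : ∀ x, F (σ x) = F x) : ∀ (i : ℤ) (x : α), F ((σ ^ i) x) = F x := by
  have hinv : ∀ x, F (σ⁻¹ x) = F x := by
    intro x
    have := h (σ⁻¹ x)
    rw [Equiv.Perm.coe_inv, Equiv.apply_symm_apply] at this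
    exact this.symm
  intro i
  induction i using Int.induction_on with
  | zero => intro x; simp
  | succ k ihk =>
    intro x
    have hx : (σ ^ ((k : ℤ) + 1)) x = (σ ^ (k : ℤ)) (σ x) := by
      rw [zpow_add_one]; rfl
    rw [hx, ihk, h]
  | pred k ihk =>
    intro x
    have hx : (σ ^ (-(k : ℤ) - 1)) x = (σ ^ (-(k : ℤ))) (σ⁻¹ x) := by
      rw [zpow_sub_one]; rfl
    rw [hx, ihk, hinv]

lemma equivariant_zpow (σ : Equiv.Perm α) (τ : Equiv.Perm β) (f : α → β)
    (h : ∀ x, f (σ x) = τ (f x)) : ∀ (i : ℤ) (x : α), f ((σ ^ i) x) = (τ ^ i) (f x) := by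
  have hinv : ∀ x, f (σ⁻¹ x) = τ⁻¹ (f x) := by
    intro x
    have := h (σ⁻¹ x)
    rw [Equiv.Perm.coe_inv, Equiv.apply_symm_apply] at this
    rw [this, Equiv.Perm.coe_inv, Equiv.Perm.coe_inv, Equiv.symm_apply_apply]
  intro i
  induction i using Int.induction_on with
  | zero => intro x; simp
  | succ k ihk =>
    intro x
    have hx : (σ ^ ((k : ℤ) + 1)) x = (σ ^ (k : ℤ)) (σ x) := by
      rw [zpow_add_one]; rfl
    have hy : (τ ^ ((k : ℤ) + 1)) (f x) = (τ ^ (k : ℤ)) (τ (f x)) := by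
      rw [zpow_add_one]; rfl
    rw [hx, hy, ihk, h]
  | pred k ihk =>
    intro x
    have hx : (σ ^ (-(k : ℤ) - 1)) x = (σ ^ (-(k : ℤ))) (σ⁻¹ x) := by
      rw [zpow_sub_one]; rfl
    have hy : (τ ^ (-(k : ℤ) - 1)) (f x) = (τ ^ (-(k : ℤ))) (τ⁻¹ (f x)) := by
      rw [zpow_sub_one]; rfl
    rw [hx, hy, ihk, hinv]

/-- `(σ ^ i) x` is in the same orbit as `x`. -/
lemma orbitRel_zpow (σ : Equiv.Perm α) (i : ℤ) (x : α) :
    MulAction.orbitRel (Subgroup.zpowers σ) α ((σ ^ i) x) x := by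
  rw [MulAction.orbitRel_apply]
  exact ⟨⟨σ ^ i, zpow_mem (Subgroup.mem_zpowers σ) i⟩, rfl⟩

lemma quot_mk_zpow (σ : Equiv.Perm α) (i : ℤ) (x : α) :
    (Quotient.mk'' ((σ ^ i) x) :
        Quotient (MulAction.orbitRel (Subgroup.zpowers σ) α)) = Quotient.mk'' x :=
  Quotient.sound' (orbitRel_zpow σ i x)

lemma quot_mk_apply (σ : Equiv.Perm α) (x : α) :
    (Quotient.mk'' (σ x) :
        Quotient (MulAction.orbitRel (Subgroup.zpowers σ) α)) = Quotient.mk'' x := by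
  have := quot_mk_zpow σ 1 x
  rwa [zpow_one] at this

lemma invariant_orbitRel (σ : Equiv.Perm α) (F : α → β)
    (h : ∀ x, F (σ x) = F x) {x y : α}
    (hxy : MulAction.orbitRel (Subgroup.zpowers σ) α x y) : F x = F y := by
  rw [MulAction.orbitRel_apply, MulAction.mem_orbit_iff] at hxy
  obtain ⟨⟨g, hg⟩, hgy⟩ := hxy
  obtain ⟨i, rfl⟩ := Subgroup.mem_zpowers_iff.mp hg
  have hgy' : (σ ^ i) y = x := hgy
  rw [← hgy', invariant_zpow σ F h i y]

end helpers

section cycleCount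

variable {n : ℕ}

/-- Adding a fixed point increases the cycle count by 1. -/
lemma cycleCount_decomposeFin_zero (e : Equiv.Perm (Fin n)) :
    cycleCount (Equiv.Perm.decomposeFin.symm (0, e)) = cycleCount e + 1 := by
  set τ := Equiv.Perm.decomposeFin.symm (0, e) with hτ
  have hτ0 : τ 0 = 0 := Equiv.Perm.decomposeFin_symm_apply_zero 0 e
  have hτs : ∀ v : Fin n, τ v.succ = (e v).succ := by
    intro v
    rw [hτ, Equiv.Perm.decomposeFin_symm_apply_succ, Equiv.swap_self]
    rfl
  have E : Quotient (MulAction.orbitRel (Subgroup.zpowers τ) (Fin (n+1)))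
      ≃ Option (Quotient (MulAction.orbitRel (Subgroup.zpowers e) (Fin n))) := by
    refine
      { toFun := Quotient.lift
          (fun w => Fin.cases none (fun v => some (Quotient.mk'' v)) w) ?_
        invFun := fun o => o.elim (Quotient.mk'' 0)
          (Quotient.lift (fun v => Quotient.mk'' v.succ) ?_)
        left_inv := ?_
        right_inv := ?_ }
    · intro a b hab
      refine invariant_orbitRel τ _ ?_ hab
      intro w
      induction w using Fin.cases with
      | zero => rw [hτ0]
      | succ v =>
        rw [hτs v, Fin.cases_succ, Fin.cases_succ, quot_mk_apply]
    · intro a b hab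
      refine invariant_orbitRel e (fun v => Quotient.mk'' v.succ) ?_ hab
      intro v
      show (Quotient.mk'' ((e v).succ) :
        Quotient (MulAction.orbitRel (Subgroup.zpowers τ) (Fin (n+1)))) = Quotient.mk'' v.succ
      rw [← hτs v, quot_mk_apply]
    · intro w
      induction w using Quotient.inductionOn' with
      | h w =>
        induction w using Fin.cases with
        | zero => simp
        | succ v => simp
    · intro o
      match o with
      | none => simp
      | some q =>
        induction q using Quotient.inductionOn' with
        | h v => simp
  rw [cycleCount, cycleCount, Nat.card_congr E, Finite.card_option]

/-- Inserting `0` into an existing cycle keeps the cycle count. -/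
lemma cycleCount_decomposeFin_succ (e : Equiv.Perm (Fin n)) (q : Fin n) :
    cycleCount (Equiv.Perm.decomposeFin.symm (q.succ, e)) = cycleCount e := by
  set τ := Equiv.Perm.decomposeFin.symm (q.succ, e) with hτ
  have hτ0 : τ 0 = q.succ := Equiv.Perm.decomposeFin_symm_apply_zero q.succ e
  have hτs : ∀ v : Fin n, τ v.succ = Equiv.swap 0 q.succ (e v).succ := fun v =>
    Equiv.Perm.decomposeFin_symm_apply_succ e q.succ v
  -- the two step relations on quotients
  have key : ∀ v : Fin n,
      (Quotient.mk'' ((e v).succ) :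
        Quotient (MulAction.orbitRel (Subgroup.zpowers τ) (Fin (n+1))))
        = Quotient.mk'' v.succ := by
    intro v
    by_cases h : (e v).succ = q.succ
    · -- τ (v.succ) = 0, τ 0 = q.succ = (e v).succ
      have h1 : τ v.succ = 0 := by rw [hτs v, h, Equiv.swap_apply_right]
      have h2 : (τ ^ (2:ℤ)) v.succ = (e v).succ := by
        have : (τ ^ (2:ℤ)) v.succ = τ (τ v.succ) := by
          norm_num [zpow_two, sq, Equiv.Perm.mul_apply]
        rw [this, h1, hτ0, h]
      rw [← h2, quot_mk_zpow]
    · have h1 : τ v.succ = (e v).succ := by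
        rw [hτs v]
        exact Equiv.swap_apply_of_ne_of_ne (Fin.succ_ne_zero (e v)) h
      rw [← h1, quot_mk_apply]
  have E : Quotient (MulAction.orbitRel (Subgroup.zpowers τ) (Fin (n+1)))
      ≃ Quotient (MulAction.orbitRel (Subgroup.zpowers e) (Fin n)) := by
    refine
      { toFun := Quotient.lift
          (fun w => Fin.cases (Quotient.mk'' q) (fun v => Quotient.mk'' v) w) ?_
        invFun := Quotient.lift (fun v => Quotient.mk'' v.succ) ?_
        left_inv := ?_
        right_inv := ?_ }
    · intro a b hab
      refine invariant_orbitRel τ _ ?_ hab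
      intro w
      induction w using Fin.cases with
      | zero => rw [hτ0, Fin.cases_succ, Fin.cases_zero]
      | succ v =>
        rw [hτs v]
        by_cases h : (e v).succ = q.succ
        · rw [h, Equiv.swap_apply_right, Fin.cases_zero, Fin.cases_succ]
          have : q = e v := (Fin.succ_injective n h.symm)
          rw [this, quot_mk_apply]
        · rw [Equiv.swap_apply_of_ne_of_ne (Fin.succ_ne_zero (e v)) h,
            Fin.cases_succ, Fin.cases_succ, quot_mk_apply]
    · intro a b hab
      exact invariant_orbitRel e (fun v => Quotient.mk'' v.succ) key hab
    · intro w
      induction w using Quotient.inductionOn' with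
      | h w =>
        induction w using Fin.cases with
        | zero =>
          simp only [Quotient.lift_mk, Fin.cases_zero]
          show (Quotient.mk'' q.succ :
            Quotient (MulAction.orbitRel (Subgroup.zpowers τ) (Fin (n+1)))) = Quotient.mk'' 0
          rw [← hτ0, quot_mk_apply]
        | succ v => simp
    · intro v
      induction v using Quotient.inductionOn' with
      | h v => simp
  rw [cycleCount, cycleCount, Nat.card_congr E]

end cycleCount

section stirlingcount

lemma cycleCount_fin_zero (σ : Equiv.Perm (Fin 0)) : cycleCount σ = 0 := by
  have : IsEmpty (Quotient (MulAction.orbitRel (Subgroup.zpowers σ) (Fin 0))) :=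
    ⟨fun x => Quotient.inductionOn' x (fun v => v.elim0)⟩
  rw [cycleCount, Nat.card_of_isEmpty]

lemma cycleCount_ne_zero {n : ℕ} (σ : Equiv.Perm (Fin (n+1))) : cycleCount σ ≠ 0 := by
  have h1 : Nonempty (Quotient (MulAction.orbitRel (Subgroup.zpowers σ) (Fin (n+1)))) :=
    ⟨Quotient.mk'' 0⟩
  have h2 : Finite (Quotient (MulAction.orbitRel (Subgroup.zpowers σ) (Fin (n+1)))) :=
    Quotient.finite _
  rw [cycleCount]
  exact Nat.card_pos.ne'

lemma stirling1_zero_zero : stirling1 0 0 = 1 := by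
  haveI : Unique {σ : Equiv.Perm (Fin 0) // cycleCount σ = 0} :=
    { default := ⟨1, cycleCount_fin_zero 1⟩
      uniq := by
        rintro ⟨σ, hσ⟩
        apply Subtype.ext
        exact Equiv.ext fun x => x.elim0 }
  rw [stirling1]
  exact Nat.card_unique

lemma stirling1_zero_succ (k : ℕ) : stirling1 0 (k+1) = 0 := by
  haveI : IsEmpty {σ : Equiv.Perm (Fin 0) // cycleCount σ = k+1} :=
    ⟨by rintro ⟨σ, hσ⟩; rw [cycleCount_fin_zero] at hσ; exact Nat.succ_ne_zero k hσ.symm⟩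
  rw [stirling1, Nat.card_of_isEmpty]

lemma stirling1_succ_zero (n : ℕ) : stirling1 (n+1) 0 = 0 := by
  haveI : IsEmpty {σ : Equiv.Perm (Fin (n+1)) // cycleCount σ = 0} :=
    ⟨by rintro ⟨σ, hσ⟩; exact cycleCount_ne_zero σ hσ⟩
  rw [stirling1, Nat.card_of_isEmpty]

lemma nat_card_sigma {ι : Type*} [Fintype ι] (f : ι → Type*) [∀ i, Finite (f i)] :
    Nat.card (Σ i, f i) = ∑ i, Nat.card (f i) := by
  letI := fun i => Fintype.ofFinite (f i)
  simp [Nat.card_eq_fintype_card, Fintype.card_sigma]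

lemma stirling1_rec (n k : ℕ) :
    stirling1 (n+1) (k+1) = n * stirling1 n (k+1) + stirling1 n k := by
  classical
  have E1 : {σ : Equiv.Perm (Fin (n+1)) // cycleCount σ = k+1}
      ≃ {x : Fin (n+1) × Equiv.Perm (Fin n) //
          cycleCount (Equiv.Perm.decomposeFin.symm x) = k+1} :=
    Equiv.subtypeEquiv Equiv.Perm.decomposeFin
      (by intro σ; rw [Equiv.symm_apply_apply])
  have E2 : {x : Fin (n+1) × Equiv.Perm (Fin n) //
          cycleCount (Equiv.Perm.decomposeFin.symm x) = k+1}
      ≃ Σ p : Fin (n+1), {e : Equiv.Perm (Fin n) //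
          cycleCount (Equiv.Perm.decomposeFin.symm (p, e)) = k+1} :=
    Equiv.subtypeProdEquivSigmaSubtype
      (fun a b => cycleCount (Equiv.Perm.decomposeFin.symm (a, b)) = k+1)
  rw [stirling1, Nat.card_congr (E1.trans E2), nat_card_sigma, Fin.sum_univ_succ]
  have h0 : Nat.card {e : Equiv.Perm (Fin n) //
      cycleCount (Equiv.Perm.decomposeFin.symm ((0 : Fin (n+1)), e)) = k+1} = stirling1 n k := by
    rw [stirling1]
    refine Nat.card_congr (Equiv.subtypeEquivRight ?_)
    intro e
    rw [cycleCount_decomposeFin_zero]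
    omega
  have hs : ∀ i : Fin n, Nat.card {e : Equiv.Perm (Fin n) //
      cycleCount (Equiv.Perm.decomposeFin.symm (i.succ, e)) = k+1} = stirling1 n (k+1) := by
    intro i
    rw [stirling1]
    refine Nat.card_congr (Equiv.subtypeEquivRight ?_)
    intro e
    rw [cycleCount_decomposeFin_succ]
  rw [h0]
  have : ∑ i : Fin n, Nat.card {e : Equiv.Perm (Fin n) //
      cycleCount (Equiv.Perm.decomposeFin.symm (i.succ, e)) = k+1} = n * stirling1 n (k+1) := by
    rw [Finset.sum_congr rfl (fun i _ => hs i), Finset.sum_const, Finset.card_univ,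
      Fintype.card_fin, smul_eq_mul]
  rw [this, Nat.add_comm]

end stirlingcount

section final


lemma stirling1_eq_stirN : ∀ n k : ℕ, stirling1 n k = stirN n k := by
  intro n
  induction n with
  | zero =>
    intro k
    match k with
    | 0 => exact stirling1_zero_zero
    | k+1 => exact stirling1_zero_succ k
  | succ n ih =>
    intro k
    match k with
    | 0 => rw [stirling1_succ_zero, stirN_succ_zero]
    | k+1 => rw [stirling1_rec, stirN_succ_succ, ih, ih]

lemma sum_Icc_one (M : ℕ) (f : ℕ → ℤ) :
    ∑ k ∈ Finset.Icc 1 M, f k = ∑ i ∈ range M, f (i+1) := by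
  induction M with
  | zero => simp
  | succ M ih =>
    rw [Finset.sum_Icc_succ_top (by omega), ih, Finset.sum_range_succ]

lemma a_eq (N : ℕ) :
    a N = ∑ j ∈ range N, (-1:ℤ)^j * (j.factorial : ℤ) * (stirN N (j+1) : ℤ) := by
  rw [a, sum_Icc_one]
  refine Finset.sum_congr rfl ?_
  intro j _
  rw [stirling1_eq_stirN]
  simp

/-- The recurrence `(n-1)! - a_n = ∑_{k=1}^{n-1} C(n-1,k-1) (n-k-1)! a_k` for `n ≥ 1`. -/
theorem stmt11 (n : ℕ) (hn : 1 ≤ n) :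
    (Nat.factorial (n - 1) : ℤ) - a n
      = ∑ k ∈ Finset.Icc 1 (n - 1),
          ((n - 1).choose (k - 1) : ℤ) * (Nat.factorial (n - k - 1) : ℤ) * a k := by
  obtain ⟨m, rfl⟩ : ∃ m, n = m + 1 := ⟨n - 1, by omega⟩
  have hL : (Nat.factorial (m + 1 - 1) : ℤ) - a (m+1)
      = ∑ j ∈ range m, (-1:ℤ)^j * ((j+1).factorial : ℤ) * (stirN (m+1) (j+2) : ℤ) := by
    rw [a_eq (m+1), Finset.sum_range_succ']
    simp only [Nat.add_sub_cancel, pow_zero, Nat.factorial_zero, Nat.cast_one, one_mul,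
      zero_add, stirN_one]
    have hX : ∀ S : ℤ, (m.factorial:ℤ) - (S + (m.factorial:ℤ)) = -S := fun S => by ring
    rw [hX, ← Finset.sum_neg_distrib]
    refine Finset.sum_congr rfl ?_
    intro j _
    rw [pow_succ]
    ring
  have hR : (∑ k ∈ Finset.Icc 1 (m + 1 - 1),
        ((m + 1 - 1).choose (k - 1) : ℤ) * (Nat.factorial (m + 1 - k - 1) : ℤ) * a k)
      = ∑ j ∈ range m, (-1:ℤ)^j * ((j+1).factorial : ℤ) * (stirN (m+1) (j+2) : ℤ) := by
    simp only [Nat.add_sub_cancel]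
    rw [sum_Icc_one]
    have step1 : ∀ i ∈ range m,
        (m.choose (i+1-1) : ℤ) * (Nat.factorial (m + 1 - (i+1) - 1) : ℤ) * a (i+1)
        = ∑ j ∈ range m, (m.choose i : ℤ) * ((m-1-i).factorial : ℤ)
            * ((-1:ℤ)^j * (j.factorial : ℤ) * (stirN (i+1) (j+1) : ℤ)) := by
      intro i hi
      rw [mem_range] at hi
      have e1 : i + 1 - 1 = i := by omega
      have e2 : m + 1 - (i+1) - 1 = m - 1 - i := by omega
      rw [e1, e2, a_eq, Finset.mul_sum]
      refine Finset.sum_subset (Finset.range_subset_range.mpr (by omega)) ?_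
      intro j _ hj'
      rw [mem_range] at hj'
      rw [stirN_of_lt (i+1) (j+1) (by omega)]
      push_cast
      ring
    rw [Finset.sum_congr rfl step1, Finset.sum_comm]
    refine Finset.sum_congr rfl ?_
    intro j _
    have unat := stirN_U m (j+1)
    calc ∑ i ∈ range m, (m.choose i : ℤ) * ((m-1-i).factorial : ℤ)
            * ((-1:ℤ)^j * (j.factorial : ℤ) * (stirN (i+1) (j+1) : ℤ))
        = ((-1:ℤ)^j * (j.factorial : ℤ))
            * ∑ i ∈ range m, ((m.choose i * (m-1-i).factorial * stirN (i+1) (j+1) : ℕ) : ℤ) := by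
          rw [Finset.mul_sum]
          refine Finset.sum_congr rfl ?_
          intro i _
          push_cast
          ring
      _ = ((-1:ℤ)^j * (j.factorial : ℤ)) * (((j+1) * stirN (m+1) (j+1+1) : ℕ) : ℤ) := by
          rw [← Nat.cast_sum, unat]
      _ = (-1:ℤ)^j * ((j+1).factorial : ℤ) * (stirN (m+1) (j+2) : ℤ) := by
          push_cast [Nat.factorial_succ]
          ring
  rw [hL, hR]

end final
end

section
/- For every prime power q and finite rooted tree T, the variety X_T over F_q has exactly φ_T(q) rational points, where φ_T is defined recursively by φ_T(q) = ∏_k (1 + q φ_{T_k}(q)); equivalently, the number of prunings S of T weighted by q^{|edges(S)|} counts the F_q-points of a disjoint union of affine spaces A^{rk(S)} over prunings S of T. -/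
/-- Finite rooted trees: a node together with the list of subtrees at its children. -/
inductive RTree where
  | node : List RTree → RTree

namespace RTree

/-- The polynomial `φ_T(q) = ∏_k (1 + q φ_{T_k}(q))` over the child subtrees. -/
noncomputable def phi : RTree → Polynomial ℤ
  | node ts => (ts.attach.map fun x => 1 + Polynomial.X * phi x.1).prod
decreasing_by simp only [RTree.node.sizeOf_spec]; exact Nat.lt_add_left 1 (List.sizeOf_lt_of_mem x.2)


/-- `win T = true` iff the second player wins the game on `T`:
every child subtree is a first-player win. -/
def win : RTree → Bool
  | node ts => ts.attach.all fun x => !win x.1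
decreasing_by simp only [RTree.node.sizeOf_spec]; exact Nat.lt_add_left 1 (List.sizeOf_lt_of_mem x.2)


/-- Number of edges of a rooted tree. -/
def numEdges : RTree → ℕ
  | node ts => (ts.attach.map fun x => numEdges x.1 + 1).sum
decreasing_by simp only [RTree.node.sizeOf_spec]; exact Nat.lt_add_left 1 (List.sizeOf_lt_of_mem x.2)


/-- The list of all prunings of a rooted tree: for each child, either drop it or keep a
pruning of its subtree.  Each choice is listed once, so multiplicities of equal subtrees
are accounted for. -/
def prunings : RTree → List RTree
  | node ts =>
      ((ts.attach.map fun x => (none : Option RTree) :: (prunings x.1).map some).sections).map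
        fun l => node l.reduceOption
decreasing_by simp only [RTree.node.sizeOf_spec]; exact Nat.lt_add_left 1 (List.sizeOf_lt_of_mem x.2)


end RTree

namespace RTree

lemma sum_sections {α : Type*} (f : α → ℤ) : ∀ Ls : List (List α),
    ((Ls.sections).map fun l => (l.map f).prod).sum = (Ls.map fun L => (L.map f).sum).prod
  | [] => by simp
  | L :: Ls => by
    simp only [List.sections, List.flatMap, List.map_flatten, List.sum_flatten, List.map_map,
      List.map_cons, List.prod_cons]
    rw [← sum_sections f Ls]
    simp only [Function.comp_def, List.map_map, List.map_cons, List.prod_cons,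
      List.sum_map_mul_right, List.sum_map_mul_left]

lemma weight_reduceOption (q : ℤ) (l : List (Option RTree)) :
    q ^ numEdges (node l.reduceOption)
      = (l.map fun o => o.elim 1 fun r => q ^ (numEdges r + 1)).prod := by
  rw [numEdges, List.attach_map_val (l := l.reduceOption) (f := fun r => numEdges r + 1)]
  induction l with
  | nil => simp
  | cons a l ih =>
    cases a with
    | none => simpa using ih
    | some r =>
      simp only [List.reduceOption_cons_of_some, List.map_cons, List.sum_cons, List.prod_cons,
        Option.elim, pow_add] at *
      rw [ih]

lemma key (q : ℤ) : ∀ T : RTree,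
    ((prunings T).map fun S => q ^ numEdges S).sum = (phi T).eval q
  | node ts => by
    rw [prunings, phi]
    simp only [List.map_map, Function.comp_def]
    rw [show (fun l : List (Option RTree) => q ^ numEdges (node l.reduceOption))
        = fun l => (l.map fun o => o.elim 1 fun r => q ^ (numEdges r + 1)).prod from
      funext (weight_reduceOption q)]
    rw [sum_sections, Polynomial.eval_list_prod, List.map_map, List.map_map]
    congr 1
    apply List.map_congr_left
    intro x hx
    simp only [Function.comp_def, List.map_cons, List.map_map, List.sum_cons,
      Option.elim, Polynomial.eval_add, Polynomial.eval_one, Polynomial.eval_mul,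
      Polynomial.eval_X]
    rw [← key q x.1]
    simp [Function.comp_def, pow_succ, mul_comm, List.sum_map_mul_left, List.sum_map_mul_right]
decreasing_by simp only [RTree.node.sizeOf_spec]; exact Nat.lt_add_left 1 (List.sizeOf_lt_of_mem x.2)

end RTree

/-- Over any finite field `F` (whose cardinality is necessarily a prime power `q`), the
variety `X_T` — a disjoint union of affine cells `𝔸^{e(S)}` over the prunings `S` of
`T` — has exactly `φ_T(q)` rational points. -/
theorem stmt16 (T : RTree) (F : Type*) [Field F] [Fintype F] :
    (((RTree.prunings T).map fun S => (Nat.card (Fin (RTree.numEdges S) → F) : ℤ)).sum)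
      = Polynomial.eval ((Fintype.card F : ℤ)) (RTree.phi T) := by
  rw [← RTree.key (Fintype.card F : ℤ) T]
  congr 1
  apply List.map_congr_left
  intro S _
  simp [Nat.card_eq_fintype_card, Fintype.card_fun]
end
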